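/- Every countable connected simple graph has a normal spanning tree. -/

import Mathlib

open Set

namespace NST

variable {V : Type*}

/-- A ray (one-way infinite path) in `G`, given by its vertex sequence. -/
def IsRay (G : SimpleGraph V) (f : ℕ → V) : Prop :=
  Function.Injective f ∧ ∀ n, G.Adj (f n) (f (n + 1))

/-- `S` separates `A` from `B` in `G`: every walk from `A` to `B` meets `S`. -/
def Separates (G : SimpleGraph V) (S A B : Set V) : Prop :=
  ∀ a ∈ A, ∀ b ∈ B, ∀ p : G.Walk a b, ∃ s ∈ S, s ∈ p.support

/-- `U` is dispersed in `G`: every ray can be separated from `U` by a finite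
vertex set (separating `U` from a tail of the ray). -/
def Dispersed (G : SimpleGraph V) (U : Set V) : Prop :=
  ∀ f : ℕ → V, IsRay G f →
    ∃ S : Set V, S.Finite ∧ ∃ N : ℕ, Separates G S U (f '' {n | N ≤ n})

/-- A subdivision of the countably infinite complete graph `K^{ℵ₀}` inside `G`:
countably many branch vertices, pairwise joined by internally disjoint paths. -/
structure KSubdivision (G : SimpleGraph V) where
  branch : ℕ → V
  inj : Function.Injective branch
  path : ∀ i j : ℕ, i < j → G.Walk (branch i) (branch j)
  isPath : ∀ i j (h : i < j), (path i j h).IsPath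
  internallyDisjoint : ∀ i j (h : i < j), ∀ i' j' (h' : i' < j'), (i, j) ≠ (i', j') →
    ∀ v, v ∈ (path i j h).support → v ∈ (path i' j' h').support →
      (v = branch i ∨ v = branch j) ∧ (v = branch i' ∨ v = branch j')

/-- The vertex set of a subdivided `K^{ℵ₀}`. -/
def KSubdivision.verts {G : SimpleGraph V} (K : KSubdivision G) : Set V :=
  ⋃ (i : ℕ) (j : ℕ) (h : i < j), {v | v ∈ (K.path i j h).support}

/-- `U` is `TK^{ℵ₀}`-dispersed in `G`: every subdivided infinite clique in `G`
can be separated from `U` by a finite vertex set. -/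
def TKDispersed (G : SimpleGraph V) (U : Set V) : Prop :=
  ∀ K : KSubdivision G, ∃ S : Set V, S.Finite ∧ Separates G S U K.verts

/-- Tree-order of a (spanning) tree `T` on `V` with root `r`:
`u ≤ v` iff `u` lies on every (equivalently, the unique) `r`–`v` path in `T`. -/
def TreeLE (T : SimpleGraph V) (r u v : V) : Prop :=
  ∀ p : T.Walk r v, p.IsPath → u ∈ p.support

/-- `T` is a normal spanning tree of `G` with root `r`. -/
def IsNormalSpanningTree (G T : SimpleGraph V) (r : V) : Prop :=
  T ≤ G ∧ T.IsTree ∧ ∀ u v : V, G.Adj u v → TreeLE T r u v ∨ TreeLE T r v u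

/-- `G` has a normal spanning tree. -/
def HasNST (G : SimpleGraph V) : Prop :=
  ∃ (T : SimpleGraph V) (r : V), IsNormalSpanningTree G T r

/-- Tree-order for a rooted tree given as a subgraph `T ⊆ G`. -/
def SubTreeLE (G : SimpleGraph V) (T : G.Subgraph) (r u v : V) : Prop :=
  ∃ (hr : r ∈ T.verts) (hu : u ∈ T.verts) (hv : v ∈ T.verts),
    ∀ p : T.coe.Walk ⟨r, hr⟩ ⟨v, hv⟩, p.IsPath → ⟨u, hu⟩ ∈ p.support

/-- `p` is a `T`-path in `G`: a nontrivial path with both ends in `T` but all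
edges and inner vertices outside `T`. -/
def IsTPath (G : SimpleGraph V) (T : G.Subgraph) {u v : V} (p : G.Walk u v) : Prop :=
  p.IsPath ∧ 0 < p.length ∧ u ∈ T.verts ∧ v ∈ T.verts ∧
    (∀ w ∈ p.support, w ≠ u → w ≠ v → w ∉ T.verts) ∧
    ∀ e ∈ p.edges, e ∉ T.edgeSet

/-- `T` is a normal rooted tree in `G` with root `r`: it is a tree containing `r`,
and the endvertices of every `T`-path in `G` are comparable in its tree-order. -/
def IsNormalTree (G : SimpleGraph V) (T : G.Subgraph) (r : V) : Prop :=
  T.coe.IsTree ∧ r ∈ T.verts ∧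
    ∀ (u v : V) (p : G.Walk u v), IsTPath G T p →
      SubTreeLE G T r u v ∨ SubTreeLE G T r v u

/-- `D` is (the vertex set of) a connected component of the subgraph of `G`
induced on `A`: a maximal subset of `A` inducing a connected subgraph. -/
def IsComponentOf (G : SimpleGraph V) (A D : Set V) : Prop :=
  D ⊆ A ∧ D.Nonempty ∧ (G.induce D).Connected ∧
    ∀ D' : Set V, D ⊆ D' → D' ⊆ A → (G.induce D').Connected → D' = D

/-- The neighbourhood `N(D)` of a set `D` in (the vertex set of) `T`. -/
def NbhdIn (G : SimpleGraph V) (T : G.Subgraph) (D : Set V) : Set V :=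
  {x ∈ T.verts | ∃ d ∈ D, G.Adj x d}

/-- The subgraph `T` of `G` is rayless: it contains no one-way infinite path. -/
def Rayless {W : Type*} {G : SimpleGraph W} (T : G.Subgraph) : Prop :=
  ¬ ∃ f : ℕ → W, Function.Injective f ∧ ∀ n, T.Adj (f n) (f (n + 1))

/-- `x` dominates the ray `f` in `G`: no finite vertex set avoiding `x`
separates `x` from (a tail of) the ray. -/
def Dominates (G : SimpleGraph V) (f : ℕ → V) (x : V) : Prop :=
  ∀ S : Set V, S.Finite → x ∉ S →
    ∃ (n : ℕ) (p : G.Walk x (f n)), ∀ s ∈ S, s ∉ p.support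

end NST

open NST

namespace NSTProof

open SimpleGraph List

variable {V : Type*}

structure St (G : SimpleGraph V) (r : V) : Type _ where
  dom : Set V
  fin : dom.Finite
  f : V → List V
  hr : r ∈ dom
  f_r : f r = [r]
  hlast : ∀ v ∈ dom, (f v).getLast? = some v
  hchain : ∀ v ∈ dom, (f v).Chain' G.Adj
  hmem : ∀ v ∈ dom, ∀ u ∈ f v, u ∈ dom
  hnodup : ∀ v ∈ dom, (f v).Nodup
  hsing : ∀ v ∈ dom, f v = [v] → v = r
  hclosed : ∀ v ∈ dom, ∀ l, l ≠ [] → l <+: f v → ∃ u ∈ dom, f u = l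
  hcompat : ∀ u ∈ dom, ∀ v ∈ dom, ∀ w : G.Walk u v,
    (∀ y ∈ w.support, y ≠ u → y ≠ v → y ∉ dom) → (f u <+: f v ∨ f v <+: f u)

variable {G : SimpleGraph V} {r : V}

lemma St.f_ne_nil (σ : St G r) {v : V} (h : v ∈ σ.dom) : σ.f v ≠ [] := by
  intro hn; simpa [hn] using σ.hlast v h

lemma St.mem_self (σ : St G r) {v : V} (h : v ∈ σ.dom) : v ∈ σ.f v :=
  List.mem_of_getLast? (σ.hlast v h)

lemma St.end_inj (σ : St G r) {u v : V} (hu : u ∈ σ.dom) (hv : v ∈ σ.dom)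
    (h : σ.f u = σ.f v) : u = v := by
  have h1 := σ.hlast u hu
  rw [h, σ.hlast v hv] at h1
  exact (Option.some.inj h1).symm

/-- the base state: single vertex `r`. -/
def base (G : SimpleGraph V) (r : V) : St G r where
  dom := {r}
  fin := Set.finite_singleton r
  f := fun v => [v]
  hr := rfl
  f_r := rfl
  hlast := by intro v hv; simp
  hchain := by intro v hv; exact List.isChain_singleton _
  hmem := by intro v hv u hu; simp_all
  hnodup := by intro v hv; simp
  hsing := by intro v hv _; exact hv
  hclosed := by
    intro v hv l hl hpre
    refine ⟨v, hv, ?_⟩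
    rcases hpre with ⟨t, ht⟩
    cases l with
    | nil => simp_all
    | cons a l' => cases l' <;> simp_all
  hcompat := by
    intro u hu v hv w hw
    rcases hu with rfl
    rcases hv with rfl
    left; rfl

lemma attach_exists (σ : St G r) (x v : V) (hx : x ∈ σ.dom) (hv : v ∉ σ.dom)
    (hadj : G.Adj x v)
    (hmax : ∀ u ∈ σ.dom, (∃ w : G.Walk u v, ∀ y ∈ w.support, y ≠ u → y ∉ σ.dom) →
      σ.f u <+: σ.f x) :
    ∃ σ' : St G r, σ'.dom = insert v σ.dom ∧ (∀ u ∈ σ.dom, σ'.f u = σ.f u) ∧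
      σ'.f v = σ.f x ++ [v] := by
  classical
  set f' : V → List V := Function.update σ.f v (σ.f x ++ [v]) with hf'
  have hfold : ∀ u ∈ σ.dom, f' u = σ.f u := by
    intro u hu
    have : u ≠ v := fun h => hv (h ▸ hu)
    simp [hf', Function.update_of_ne this]
  have hfv : f' v = σ.f x ++ [v] := by simp [hf']
  have hvnotfx : v ∉ σ.f x := fun h => hv (σ.hmem x hx v h)
  have hrne : r ≠ v := fun h => hv (h ▸ σ.hr)
  refine ⟨⟨insert v σ.dom, σ.fin.insert v, f', Set.mem_insert_of_mem _ σ.hr, ?_, ?_, ?_, ?_, ?_, ?_, ?_, ?_⟩, rfl, hfold, hfv⟩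
  · rw [hfold r σ.hr]; exact σ.f_r
  · -- hlast
    intro w hw
    rcases hw with rfl | hw
    · rw [hfv]; exact List.getLast?_concat
    · rw [hfold w hw]; exact σ.hlast w hw
  · -- hchain
    intro w hw
    rcases hw with rfl | hw
    · rw [hfv]; change List.IsChain _ _; rw [List.isChain_append]
      refine ⟨σ.hchain x hx, List.isChain_singleton _, ?_⟩
      intro a ha b hb
      rw [σ.hlast x hx] at ha
      simp only [List.head?] at hb
      cases ha; cases hb
      exact hadj
    · rw [hfold w hw]; exact σ.hchain w hw
  · -- hmem
    intro w hw u hu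
    rcases hw with rfl | hw
    · rw [hfv] at hu
      rcases List.mem_append.1 hu with h | h
      · exact Set.mem_insert_of_mem _ (σ.hmem x hx u h)
      · simp at h; subst h; exact Set.mem_insert _ _
    · rw [hfold w hw] at hu
      exact Set.mem_insert_of_mem _ (σ.hmem w hw u hu)
  · -- hnodup
    intro w hw
    rcases hw with rfl | hw
    · rw [hfv]
      simpa [List.nodup_append] using ⟨σ.hnodup x hx, fun a ha h => hvnotfx (h ▸ ha)⟩
    · rw [hfold w hw]; exact σ.hnodup w hw
  · -- hsing
    intro w hw h1
    rcases hw with rfl | hw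
    · rw [hfv] at h1
      exfalso
      have h2 := congrArg List.length h1
      simp at h2
      exact σ.f_ne_nil hx h2
    · rw [hfold w hw] at h1; exact σ.hsing w hw h1
  · -- hclosed
    intro w hw l hl hpre
    rcases hw with rfl | hw
    · rw [hfv] at hpre
      by_cases hlen : l.length ≤ (σ.f x).length
      · have hpx : l <+: σ.f x := (List.isPrefix_append_of_length hlen).1 hpre
        obtain ⟨u, hu, hfu⟩ := σ.hclosed x hx l hl hpx
        exact ⟨u, Set.mem_insert_of_mem _ hu, by rw [hfold u hu]; exact hfu⟩
      · have hlen2 : l.length = (σ.f x).length + 1 := by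
          have := hpre.length_le
          simp at this
          omega
        have hh : l = σ.f x ++ [w] := hpre.eq_of_length (by simpa using hlen2)
        exact ⟨w, Set.mem_insert _ _, by rw [hfv, hh]⟩
    · rw [hfold w hw] at hpre
      obtain ⟨u, hu, hfu⟩ := σ.hclosed w hw l hl hpre
      exact ⟨u, Set.mem_insert_of_mem _ hu, by rw [hfold u hu]; exact hfu⟩
  · -- hcompat
    intro u₁ hu₁ u₂ hu₂ w hw
    rcases hu₁ with rfl | hu₁
    · rcases hu₂ with rfl | hu₂
      · left; rfl
      · -- u₁ = v, u₂ old
        right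
        have : σ.f u₂ <+: σ.f x := by
          refine hmax u₂ hu₂ ⟨w.reverse, ?_⟩
          intro y hy hyu
          rw [SimpleGraph.Walk.support_reverse, List.mem_reverse] at hy
          by_cases hyv : y = u₁
          · subst hyv; exact hv
          · intro hyd; exact hw y hy hyv hyu (Set.mem_insert_of_mem _ hyd)
        rw [hfold u₂ hu₂, hfv]
        exact this.trans (List.prefix_append _ _)
    · rcases hu₂ with rfl | hu₂
      · -- u₂ = v, u₁ old
        left
        have : σ.f u₁ <+: σ.f x := by
          refine hmax u₁ hu₁ ⟨w, ?_⟩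
          intro y hy hyu
          by_cases hyv : y = u₂
          · subst hyv; exact hv
          · intro hyd; exact hw y hy hyu hyv (Set.mem_insert_of_mem _ hyd)
        rw [hfold u₁ hu₁, hfv]
        exact this.trans (List.prefix_append _ _)
      · -- both old
        have := σ.hcompat u₁ hu₁ u₂ hu₂ w ?_
        · rw [hfold u₁ hu₁, hfold u₂ hu₂]; exact this
        · intro y hy h1 h2 hyd
          exact hw y hy h1 h2 (Set.mem_insert_of_mem _ hyd)


/-- From any walk into `t ∉ dom`, extract a last exit point from `dom`. -/
lemma exists_exit (dom : Set V) {a t : V} (w : G.Walk a t) (ht : t ∉ dom) :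
    (∀ y ∈ w.support, y ∉ dom) ∨
      ∃ x ∈ dom, ∃ w' : G.Walk x t, ∀ y ∈ w'.support, y ≠ x → y ∉ dom := by
  induction w with
  | nil => left; intro y hy; simp at hy; subst hy; exact ht
  | @cons a b t h q ih =>
    rcases ih ht with hall | ⟨x, hx, w', hw'⟩
    · by_cases ha : a ∈ dom
      · right
        refine ⟨a, ha, SimpleGraph.Walk.cons h q, ?_⟩
        intro y hy hya
        rw [SimpleGraph.Walk.support_cons] at hy
        rcases List.mem_cons.1 hy with rfl | hy
        · exact absurd rfl hya
        · exact hall y hy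
      · left
        intro y hy
        rw [SimpleGraph.Walk.support_cons] at hy
        rcases List.mem_cons.1 hy with rfl | hy
        · exact ha
        · exact hall y hy
    · right; exact ⟨x, hx, w', hw'⟩

/-- Absorbing a path hanging from `x` into the tree, one vertex at a time. -/
lemma absorbWalk {x t : V} (p : G.Walk x t) : ∀ σ : St G r, x ∈ σ.dom → p.IsPath →
    (∀ y ∈ p.support, y ≠ x → y ∉ σ.dom) →
    (∀ u ∈ σ.dom, (∃ w : G.Walk u t, ∀ y ∈ w.support, y ≠ u → y ∉ σ.dom) →
      σ.f u <+: σ.f x) →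
    ∃ σ' : St G r, σ.dom ⊆ σ'.dom ∧ (∀ v ∈ σ.dom, σ'.f v = σ.f v) ∧ t ∈ σ'.dom := by
  induction p with
  | nil =>
    intro σ hx _ _ _
    exact ⟨σ, subset_rfl, fun v _ => rfl, hx⟩
  | @cons x b t hadj q ih =>
    intro σ hx hp hav hmax
    have hxb : b ≠ x := fun h => (h ▸ hadj).ne' rfl
    have hxq : x ∉ q.support := ((SimpleGraph.Walk.cons_isPath_iff _ _).1 hp).2
    have hqp : q.IsPath := ((SimpleGraph.Walk.cons_isPath_iff _ _).1 hp).1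
    have hbsup : b ∈ (SimpleGraph.Walk.cons hadj q).support := by
      rw [SimpleGraph.Walk.support_cons]
      exact List.mem_cons_of_mem _ q.start_mem_support
    have hb : b ∉ σ.dom := hav b hbsup hxb
    -- max condition for attaching b at x
    have hmaxb : ∀ u ∈ σ.dom, (∃ w : G.Walk u b, ∀ y ∈ w.support, y ≠ u → y ∉ σ.dom) →
        σ.f u <+: σ.f x := by
      intro u hu hex
      obtain ⟨w, hw⟩ := hex
      refine hmax u hu ⟨w.append q, ?_⟩
      intro y hy hyu
      rw [SimpleGraph.Walk.support_append, List.mem_append] at hy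
      rcases hy with hy | hy
      · exact hw y hy hyu
      · have hyq : y ∈ q.support := List.mem_of_mem_tail hy
        have hyx : y ≠ x := fun h => hxq (h ▸ hyq)
        exact hav y (by rw [SimpleGraph.Walk.support_cons]; exact List.mem_cons_of_mem _ hyq) hyx
    obtain ⟨σ₁, hdom₁, hfold₁, hfb₁⟩ := attach_exists σ x b hx hb hadj hmaxb
    have hbd₁ : b ∈ σ₁.dom := by rw [hdom₁]; exact Set.mem_insert _ _
    -- avoidance for q in σ₁
    have hav₁ : ∀ y ∈ q.support, y ≠ b → y ∉ σ₁.dom := by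
      intro y hy hyb
      rw [hdom₁]
      intro hmem
      rcases hmem with rfl | hmem
      · exact hyb rfl
      · have hyx : y ≠ x := fun h => hxq (h ▸ hy)
        exact hav y (by rw [SimpleGraph.Walk.support_cons]; exact List.mem_cons_of_mem _ hy) hyx hmem
    -- max condition in σ₁ at b
    have hmax₁ : ∀ u ∈ σ₁.dom, (∃ w : G.Walk u t, ∀ y ∈ w.support, y ≠ u → y ∉ σ₁.dom) →
        σ₁.f u <+: σ₁.f b := by
      intro u hu hex
      have hu' : u ∈ insert b σ.dom := by rw [hdom₁] at hu; exact hu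
      rcases hu' with rfl | hu'
      · exact List.prefix_rfl
      · rw [hfold₁ u hu', hfb₁]
        refine List.IsPrefix.trans ?_ (List.prefix_append _ _)
        refine hmax u hu' ?_
        obtain ⟨w, hw⟩ := hex
        refine ⟨w, ?_⟩
        intro y hy hyu
        have h2 := hw y hy hyu
        rw [hdom₁] at h2
        exact fun hyd => h2 (Set.mem_insert_of_mem _ hyd)
    obtain ⟨σ₂, hsub₂, hfold₂, ht₂⟩ := ih σ₁ hbd₁ hqp hav₁ hmax₁
    refine ⟨σ₂, ?_, ?_, ht₂⟩
    · intro v hv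
      refine hsub₂ ?_
      rw [hdom₁]
      exact Set.mem_insert_of_mem _ hv
    · intro v hv
      have hv1 : v ∈ σ₁.dom := by rw [hdom₁]; exact Set.mem_insert_of_mem _ hv
      rw [hfold₂ v hv1, hfold₁ v hv]

/-- One full absorption step: extend the state to include `t`. -/
lemma absorb_exists (hG : G.Connected) (σ : St G r) (t : V) :
    ∃ σ' : St G r, σ.dom ⊆ σ'.dom ∧ (∀ v ∈ σ.dom, σ'.f v = σ.f v) ∧ t ∈ σ'.dom := by
  classical
  by_cases ht : t ∈ σ.dom
  · exact ⟨σ, subset_rfl, fun v _ => rfl, ht⟩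
  · -- the set of attachment points
    set A : Set V := {u | u ∈ σ.dom ∧ ∃ w : G.Walk u t, ∀ y ∈ w.support, y ≠ u → y ∉ σ.dom}
      with hA
    have hAsub : A ⊆ σ.dom := fun u hu => hu.1
    have hAne : A.Nonempty := by
      obtain ⟨w⟩ := hG.preconnected r t
      rcases exists_exit σ.dom w ht with hall | ⟨x, hx, w', hw'⟩
      · exact absurd σ.hr (hall r w.start_mem_support)
      · exact ⟨x, hx, w', hw'⟩
    obtain ⟨x, hxA, hxmax⟩ := Set.exists_max_image A (fun u => (σ.f u).length)
      (σ.fin.subset hAsub) hAne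
    obtain ⟨hx, wx, hwx⟩ := hxA
    -- every attachment point's branch is a prefix of that of x
    have hmax : ∀ u ∈ σ.dom, (∃ w : G.Walk u t, ∀ y ∈ w.support, y ≠ u → y ∉ σ.dom) →
        σ.f u <+: σ.f x := by
      intro u hu hex
      obtain ⟨wu, hwu⟩ := hex
      have huA : u ∈ A := ⟨hu, wu, hwu⟩
      have hcomp := σ.hcompat u hu x hx (wu.append wx.reverse) ?_
      · rcases hcomp with h | h
        · exact h
        · have hlen := hxmax u huA
          have := h.eq_of_length (le_antisymm h.length_le hlen)
          rw [this]
      · intro y hy hyu hyx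
        rw [SimpleGraph.Walk.support_append, List.mem_append] at hy
        rcases hy with hy | hy
        · exact hwu y hy hyu
        · have : y ∈ wx.support := by
            have := List.mem_of_mem_tail hy
            rw [SimpleGraph.Walk.support_reverse, List.mem_reverse] at this
            exact this
          exact hwx y this hyx
    -- use a path extracted from the witness walk
    have hbp := wx.bypass_isPath
    have hbs := wx.support_bypass_subset
    refine absorbWalk wx.bypass σ hx hbp ?_ hmax
    intro y hy hyx
    exact hwx y (hbs hy) hyx


lemma seq_exists (hG : G.Connected) (e : ℕ → V) :
    ∃ seq : ℕ → St G r, seq 0 = base G r ∧ ∀ n, (seq n).dom ⊆ (seq (n+1)).dom ∧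
      (∀ v ∈ (seq n).dom, (seq (n+1)).f v = (seq n).f v) ∧ e n ∈ (seq (n+1)).dom := by
  choose next h1 h2 h3 using fun (σ : St G r) (t : V) => absorb_exists (r := r) hG σ t
  exact ⟨fun n => Nat.rec (motive := fun _ => St G r) (base G r)
    (fun n σ => next σ (e n)) n, rfl, fun n => ⟨h1 _ _, h2 _ _, h3 _ _⟩⟩

end NSTProof


namespace NSTProof

theorem main {V : Type*} [Countable V] (G : SimpleGraph V) (hG : G.Connected) :
    NST.HasNST G := by
  classical
  have hne : Nonempty V := hG.nonempty
  obtain ⟨e, he⟩ := exists_surjective_nat V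
  set r := e 0 with hr0
  obtain ⟨seq, hseq0, hseq⟩ := seq_exists (r := r) hG e
  -- monotonicity of the sequence
  have hmono : ∀ m n, m ≤ n → (seq m).dom ⊆ (seq n).dom ∧
      ∀ v ∈ (seq m).dom, (seq n).f v = (seq m).f v := by
    intro m n hmn
    induction n with
    | zero =>
      have : m = 0 := Nat.le_zero.1 hmn
      subst this; exact ⟨subset_rfl, fun v _ => rfl⟩
    | succ n ih =>
      rcases Nat.lt_or_ge m (n+1) with h | h
      · have hm : m ≤ n := Nat.lt_succ_iff.1 h
        obtain ⟨h1, h2⟩ := ih hm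
        refine ⟨h1.trans (hseq n).1, ?_⟩
        intro v hv
        rw [(hseq n).2.1 v (h1 hv), h2 v hv]
      · have : m = n + 1 := le_antisymm hmn h
        subst this; exact ⟨subset_rfl, fun v _ => rfl⟩
  have hex : ∀ v : V, ∃ n, v ∈ (seq n).dom := by
    intro v
    obtain ⟨m, rfl⟩ := he v
    exact ⟨m + 1, (hseq m).2.2⟩
  set F : V → List V := fun v => (seq (Nat.find (hex v))).f v with hF
  have hmemrank : ∀ v, v ∈ (seq (Nat.find (hex v))).dom := fun v => Nat.find_spec (hex v)
  have hFeq : ∀ n, ∀ v ∈ (seq n).dom, (seq n).f v = F v := by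
    intro n v hv
    have hle : Nat.find (hex v) ≤ n := Nat.find_min' (hex v) hv
    rw [hF]
    exact (hmono _ n hle).2 v (hmemrank v)
  -- basic facts about F
  have hFlast : ∀ v, (F v).getLast? = some v := by
    intro v; rw [hF]; exact (seq _).hlast v (hmemrank v)
  have hFmem : ∀ v, v ∈ F v := fun v => List.mem_of_getLast? (hFlast v)
  have hFne : ∀ v, F v ≠ [] := by
    intro v h; simpa [h] using hFlast v
  have hFchain : ∀ v, (F v).Chain' G.Adj := by
    intro v; rw [hF]; exact (seq _).hchain v (hmemrank v)
  have hFsing : ∀ v, F v = [v] → v = r := by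
    intro v h
    rw [hF] at h
    exact (seq _).hsing v (hmemrank v) h
  have hFr : F r = [r] := by
    have h0 : r ∈ (seq 0).dom := by rw [hseq0]; exact (base G r).hr
    have := hFeq 0 r h0
    rw [← this, hseq0]
    rfl
  have hFclosed : ∀ v l, l ≠ [] → l <+: F v → ∃ u, F u = l := by
    intro v l hl hp
    rw [hF] at hp
    obtain ⟨u, hu, hfu⟩ := (seq _).hclosed v (hmemrank v) l hl hp
    exact ⟨u, by rw [← hFeq _ u hu]; exact hfu⟩
  have hFedge : ∀ u v, G.Adj u v → F u <+: F v ∨ F v <+: F u := by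
    intro u v h
    have hu : u ∈ (seq (max (Nat.find (hex u)) (Nat.find (hex v)))).dom :=
      (hmono _ _ (le_max_left _ _)).1 (hmemrank u)
    have hv : v ∈ (seq (max (Nat.find (hex u)) (Nat.find (hex v)))).dom :=
      (hmono _ _ (le_max_right _ _)).1 (hmemrank v)
    have hcomp := (seq _).hcompat u hu v hv (SimpleGraph.Walk.cons h SimpleGraph.Walk.nil) ?_
    · rwa [hFeq _ u hu, hFeq _ v hv] at hcomp
    · intro y hy h1 h2
      exfalso
      simp [SimpleGraph.Walk.support_cons] at hy
      rcases hy with rfl | rfl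
      · exact h1 rfl
      · exact h2 rfl
  -- the tree
  set T : SimpleGraph V :=
    { Adj := fun u v => F v = F u ++ [v] ∨ F u = F v ++ [u]
      symm := by
        refine ⟨fun u v h => ?_⟩
        rcases h with h | h
        exacts [Or.inr h, Or.inl h]
      loopless := by
        refine ⟨fun v h => ?_⟩
        rcases h with h | h <;>
          · have := congrArg List.length h
            simp at this } with hT
  have hTadj : ∀ x y, T.Adj x y → (F y = F x ++ [y] ∨ F x = F y ++ [x]) := fun _ _ h => h
  have hTadj' : ∀ x y, (F y = F x ++ [y] ∨ F x = F y ++ [x]) → T.Adj x y := fun _ _ h => h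
  -- T ≤ G
  have hTle : T ≤ G := by
    intro u v h
    have key : ∀ a b : V, F b = F a ++ [b] → G.Adj a b := by
      intro a b hab
      have hch := hFchain b
      rw [hab] at hch; change List.IsChain _ _ at hch; rw [List.isChain_append] at hch
      exact hch.2.2 a (hFlast a) b rfl
    rcases hTadj u v h with h1 | h1
    · exact key u v h1
    · exact (key v u h1).symm
  -- the unique path support lemma
  have hkey : ∀ (a b : V) (p : T.Walk a b), p.IsPath → b = r → p.support.reverse = F a := by
    intro a b p
    induction p with
    | nil =>
      intro _ h
      subst h
      simp [hFr]
    | @cons x y z hadj q ih =>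
      intro hp hbr
      have hq := ((SimpleGraph.Walk.cons_isPath_iff _ _).1 hp).1
      have hna := ((SimpleGraph.Walk.cons_isPath_iff _ _).1 hp).2
      have ihq := ih hq hbr
      rcases hTadj _ _ hadj with h | h
      · exfalso
        have hxx : x ∈ F y := by rw [h]; exact List.mem_append_left _ (hFmem x)
        rw [← ihq, List.mem_reverse] at hxx
        exact hna hxx
      · rw [SimpleGraph.Walk.support_cons, List.reverse_cons, ihq, ← h]
  -- connectivity
  have hreach : ∀ v, T.Reachable v r := by
    have main : ∀ n, ∀ v : V, (F v).length ≤ n → T.Reachable v r := by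
      intro n
      induction n with
      | zero =>
        intro v h
        exact absurd (List.length_eq_zero_iff.1 (Nat.le_zero.1 h)) (hFne v)
      | succ n ih =>
        intro v hlen
        obtain ⟨l, hl⟩ := List.getLast?_eq_some_iff.1 (hFlast v)
        by_cases hnil : l = []
        · have hvv : F v = [v] := by rw [hl, hnil]; rfl
          rw [hFsing v hvv]
        · obtain ⟨u, hu⟩ := hFclosed v l hnil (by rw [hl]; exact List.prefix_append _ _)
          have hadj : T.Adj v u := hTadj' _ _ (Or.inr (by rw [hu, ← hl]))
          have hlt : (F u).length ≤ n := by
            have h1 := congrArg List.length hl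
            simp at h1
            rw [hu]
            omega
          exact (hadj.reachable).trans (ih u hlt)
    exact fun v => main (F v).length v le_rfl
  have hconn : T.Connected := by
    rw [SimpleGraph.connected_iff]
    exact ⟨fun a b => (hreach a).trans (hreach b).symm, hne⟩
  -- acyclicity
  have hacyc : T.IsAcyclic := by
    intro a c hc
    obtain ⟨v, hv, hvmax⟩ := Set.exists_max_image {y | y ∈ c.support}
      (fun y => (F y).length) (c.support.finite_toSet) ⟨a, c.start_mem_support⟩
    have hv' : v ∈ c.support := hv
    have hc' := hc.rotate hv'
    have hsupsub : ∀ y ∈ (c.rotate v hv').support, y ∈ c.support := by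
      intro y hy
      rw [SimpleGraph.Walk.support_eq_cons] at hy
      rcases List.mem_cons.1 hy with rfl | hy
      · exact hv'
      · have h1 := SimpleGraph.Walk.support_rotate c v hv'
        exact List.mem_of_mem_tail ((h1.perm.mem_iff).1 hy)
    have hnn : ¬ (c.rotate v hv').Nil := hc'.not_nil
    obtain ⟨b, hadj1, q, hEq⟩ := SimpleGraph.Walk.not_nil_iff.1 hnn
    rw [hEq] at hc' hsupsub
    have hlen3 : 3 ≤ (SimpleGraph.Walk.cons hadj1 q).length := hc'.three_le_length
    rw [SimpleGraph.Walk.length_cons] at hlen3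
    have hb : b ∈ c.support := hsupsub b (by
      rw [SimpleGraph.Walk.support_cons]
      exact List.mem_cons_of_mem _ q.start_mem_support)
    have hqrnn : ¬ q.reverse.Nil := by
      rw [SimpleGraph.Walk.not_nil_iff_lt_length, SimpleGraph.Walk.length_reverse]
      omega
    obtain ⟨d, hadj2, q₂, hEq2⟩ := SimpleGraph.Walk.not_nil_iff.1 hqrnn
    have hd : d ∈ c.support := by
      apply hsupsub
      rw [SimpleGraph.Walk.support_cons]
      apply List.mem_cons_of_mem
      have : d ∈ q.reverse.support := by
        rw [hEq2, SimpleGraph.Walk.support_cons]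
        exact List.mem_cons_of_mem _ q₂.start_mem_support
      rwa [SimpleGraph.Walk.support_reverse, List.mem_reverse] at this
    -- both neighbours of v on the cycle are its parent
    have hpar : ∀ y, T.Adj v y → y ∈ c.support → F v = F y ++ [v] := by
      intro y hy hyc
      rcases hTadj _ _ hy with h | h
      · exfalso
        have h1 := congrArg List.length h
        have h2 := hvmax y hyc
        simp at h1 h2
        omega
      · exact h
    have hb1 : F v = F b ++ [v] := hpar b hadj1 hb
    have hd1 : F v = F d ++ [v] := hpar d hadj2 hd
    have hbd : b = d := by
      have h1 : F b = F d := by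
        have h2 := hb1.symm.trans hd1
        have h3 := congrArg List.dropLast h2
        rwa [List.dropLast_concat, List.dropLast_concat] at h3
      have h4 := hFlast b
      rw [h1, hFlast d] at h4
      exact (Option.some.inj h4).symm
    -- contradiction with the trail property
    have htrail : (SimpleGraph.Walk.cons hadj1 q).edges.Nodup := hc'.isCircuit.isTrail.edges_nodup
    rw [SimpleGraph.Walk.edges_cons] at htrail
    have hnotmem := (List.nodup_cons.1 htrail).1
    apply hnotmem
    have hmem2 : s(v, d) ∈ q.reverse.edges := by
      rw [hEq2, SimpleGraph.Walk.edges_cons]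
      exact List.mem_cons_self
    rw [SimpleGraph.Walk.edges_reverse, List.mem_reverse] at hmem2
    rw [← hbd] at hmem2
    exact hmem2
  -- normality
  have hnorm : ∀ u v : V, G.Adj u v → NST.TreeLE T r u v ∨ NST.TreeLE T r v u := by
    have htle : ∀ u v : V, F u <+: F v → NST.TreeLE T r u v := by
      intro u v hpre p hp
      have h1 := hkey v r p.reverse hp.reverse rfl
      rw [SimpleGraph.Walk.support_reverse, List.reverse_reverse] at h1
      rw [h1]
      exact hpre.subset (hFmem u)
    intro u v h
    rcases hFedge u v h with h1 | h1
    · exact Or.inl (htle u v h1)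
    · exact Or.inr (htle v u h1)
  exact ⟨T, r, hTle, ⟨hconn, hacyc⟩, hnorm⟩

end NSTProof

/-- Every countable connected simple graph has a normal spanning tree. -/
theorem stmt3 {V : Type*} [Countable V] (G : SimpleGraph V) (hG : G.Connected) :
    HasNST G := NSTProof.main G hG
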